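/- Hamilton–Jacobi PDE for the implicit-midpoint modified Hamiltonian of the harmonic oscillator (instance of Proposition 2(b)): for t ∈ (−π, π) with t ≠ 0, define Ĥ_MP(y,t) = (tan(t/2)/t)·(p² + q²) for y = (p,q). Then for all y ∈ ℝ² and all such t, ∂/∂t [t·Ĥ_MP(y,t)] = H(y + (t/2)·J⁻¹∇_y Ĥ_MP(y,t)), where H(y) = |y|²/2; explicitly, both sides equal ½·sec²(t/2)·(p² + q²). -/

import Mathlib

noncomputable section

/-- The time-dependent modified Hamiltonian of the implicit midpoint rule for the
harmonic oscillator. -/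
def HMP (p q t : ℝ) : ℝ := (Real.tan (t / 2) / t) * (p ^ 2 + q ^ 2)

/-- Hamilton–Jacobi PDE for the implicit-midpoint modified Hamiltonian of
the harmonic oscillator: for `t ∈ (−π, π)`, `t ≠ 0`, and `y = (p, q)`,
`∂/∂t [t·Ĥ_MP(y,t)] = H(y + (t/2)·J⁻¹∇_yĤ_MP(y,t))` with `H(y) = |y|²/2` and
`J⁻¹∇Ĥ = (−∂Ĥ/∂q, ∂Ĥ/∂p)`; explicitly, both sides equal `½·sec²(t/2)·(p² + q²)`. -/
theorem stmt12 (t : ℝ) (ht : t ∈ Set.Ioo (-Real.pi) Real.pi) (ht0 : t ≠ 0) :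
    ∀ p q : ℝ,
      deriv (fun s => s * HMP p q s) t =
          ((p + (t / 2) * (-(deriv (fun Q => HMP p Q t) q))) ^ 2 +
            (q + (t / 2) * deriv (fun P => HMP P q t) p) ^ 2) / 2 ∧
        deriv (fun s => s * HMP p q s) t =
          (1 / 2) * (1 / Real.cos (t / 2)) ^ 2 * (p ^ 2 + q ^ 2) := by
  intro p q
  have hcos : Real.cos (t / 2) ≠ 0 := by
    apply ne_of_gt
    apply Real.cos_pos_of_mem_Ioo
    constructor
    · linarith [ht.1]
    · linarith [ht.2]
  set K := p ^ 2 + q ^ 2 with hK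
  -- the time function equals tan(s/2)*K everywhere
  have hfun : (fun s => s * HMP p q s) = fun s => Real.tan (s / 2) * K := by
    funext s
    by_cases hs : s = 0
    · simp [hs, HMP]
    · rw [HMP, hK]; field_simp
  have hd : HasDerivAt (fun s => Real.tan (s / 2) * K)
      ((1 / Real.cos (t / 2) ^ 2) * (1 / 2) * K) t := by
    have h1 : HasDerivAt (fun s : ℝ => s / 2) (1 / 2) t := (hasDerivAt_id t).div_const 2
    have h2 := (Real.hasDerivAt_tan hcos).comp t h1
    simpa [mul_comm] using h2.mul_const K
  have hderiv : deriv (fun s => s * HMP p q s) t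
      = (1 / Real.cos (t / 2) ^ 2) * (1 / 2) * K := by
    rw [hfun]; exact hd.deriv
  -- spatial derivatives
  have hdq : deriv (fun Q => HMP p Q t) q = (Real.tan (t / 2) / t) * (2 * q) := by
    have : HasDerivAt (fun Q => (Real.tan (t / 2) / t) * (p ^ 2 + Q ^ 2))
        ((Real.tan (t / 2) / t) * (2 * q)) q := by
      have := ((hasDerivAt_pow 2 q).const_add (p ^ 2)).const_mul (Real.tan (t / 2) / t)
      simpa using this
    simpa [HMP] using this.deriv
  have hdp : deriv (fun P => HMP P q t) p = (Real.tan (t / 2) / t) * (2 * p) := by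
    have : HasDerivAt (fun P => (Real.tan (t / 2) / t) * (P ^ 2 + q ^ 2))
        ((Real.tan (t / 2) / t) * (2 * p)) p := by
      have := ((hasDerivAt_pow 2 p).add_const (q ^ 2)).const_mul (Real.tan (t / 2) / t)
      simpa using this
    simpa [HMP] using this.deriv
  have htan : Real.tan (t / 2) = Real.sin (t / 2) / Real.cos (t / 2) :=
    Real.tan_eq_sin_div_cos _
  have hsc : Real.sin (t / 2) ^ 2 + Real.cos (t / 2) ^ 2 = 1 := Real.sin_sq_add_cos_sq _
  constructor
  · rw [hderiv, hdq, hdp, htan, hK]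
    field_simp
    linear_combination -(p ^ 2 + q ^ 2) * hsc
  · rw [hderiv]; ring
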